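/- Let Λ = ℚ[p_1, p_2, …] be the polynomial ring over ℚ in countably many variables p_k indexed by positive integers. Define h_m ∈ Λ by h_0 = 1 and the Newton recurrence m·h_m = Σ_{i=1}^m p_i·h_{m−i} for m ≥ 1, and for n ≥ 1 let D_n be the unique ℚ-linear derivation of Λ with D_n(p_k) = k^n for all k ≥ 1. Then for all n ≥ 1 and m ≥ 1, D_n(h_m) = Σ_{k=1}^m k^{n−1}·h_{m−k}. -/

import Mathlib

open MvPolynomial

/-- The derivation `D_n` of `Λ = ℚ[p_1, p_2, …]` with `D_n(p_k) = k^n` for all `k ≥ 1`. -/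
noncomputable def Dn (n : ℕ) : Derivation ℚ (MvPolynomial ℕ+ ℚ) (MvPolynomial ℕ+ ℚ) :=
  mkDerivation ℚ fun k : ℕ+ => C (((k : ℕ) : ℚ) ^ n)

theorem stmt3_aux (H : ℕ → MvPolynomial ℕ+ ℚ) (H0 : H 0 = 1)
    (Hrec : ∀ m : ℕ, 1 ≤ m → (m : ℚ) • H m =
      ∑ i ∈ Finset.range m, X i.succPNat * H (m - (i + 1)))
    (n : ℕ) (hn : 1 ≤ n) :
    ∀ m : ℕ, Dn n (H m) = ∑ k ∈ Finset.Icc 1 m, C ((k : ℚ) ^ (n - 1)) * H (m - k) := by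
  intro m
  induction m using Nat.strong_induction_on with
  | _ m IH =>
  rcases Nat.eq_zero_or_pos m with rfl | hm
  · simp [H0]
  have hDX : ∀ i : ℕ, Dn n (X i.succPNat) = C (((i + 1 : ℕ) : ℚ) ^ n) := by
    intro i
    simp [Dn, mkDerivation_X]
  have step : (m : ℚ) • Dn n (H m)
      = ∑ i ∈ Finset.range m,
          (X i.succPNat * Dn n (H (m - (i + 1)))
            + C (((i + 1 : ℕ) : ℚ) ^ n) * H (m - (i + 1))) := by
    rw [← (Dn n).map_smul, Hrec m hm, map_sum]
    refine Finset.sum_congr rfl fun i _ => ?_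
    rw [Derivation.leibniz, smul_eq_mul, smul_eq_mul, hDX, mul_comm (H (m - (i + 1)))]
  have step2 : (m : ℚ) • Dn n (H m)
      = (∑ i ∈ Finset.range m, ∑ k ∈ Finset.Icc 1 (m - 1 - i),
          C ((k : ℚ) ^ (n - 1)) * (X i.succPNat * H (m - k - (i + 1))))
        + ∑ i ∈ Finset.range m, C (((i + 1 : ℕ) : ℚ) ^ n) * H (m - (i + 1)) := by
    rw [step, Finset.sum_add_distrib]
    congr 1
    refine Finset.sum_congr rfl fun i hi => ?_
    simp only [Finset.mem_range] at hi
    rw [IH (m - (i + 1)) (by omega), Finset.mul_sum]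
    have h1 : m - 1 - i = m - (i + 1) := by omega
    rw [h1]
    refine Finset.sum_congr rfl fun k hk => ?_
    have h2 : m - (i + 1) - k = m - k - (i + 1) := by omega
    rw [h2]; ring
  have swap : (∑ i ∈ Finset.range m, ∑ k ∈ Finset.Icc 1 (m - 1 - i),
          C ((k : ℚ) ^ (n - 1)) * (X i.succPNat * H (m - k - (i + 1))))
      = ∑ k ∈ Finset.Icc 1 (m - 1),
          C ((k : ℚ) ^ (n - 1)) * (((m - k : ℕ) : ℚ) • H (m - k)) := by
    rw [Finset.sum_comm' (t' := Finset.Icc 1 (m - 1))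
      (s' := fun k => Finset.range (m - k))
      (fun i k => by simp only [Finset.mem_range, Finset.mem_Icc]; omega)]
    refine Finset.sum_congr rfl fun k hk => ?_
    simp only [Finset.mem_Icc] at hk
    rw [Hrec (m - k) (by omega), Finset.mul_sum]
  have reindex : ∑ i ∈ Finset.range m, C (((i + 1 : ℕ) : ℚ) ^ n) * H (m - (i + 1))
      = ∑ k ∈ Finset.Icc 1 m, C ((k : ℚ) ^ n) * H (m - k) := by
    rw [← Finset.Ico_add_one_right_eq_Icc, Finset.sum_Ico_eq_sum_range]
    refine Finset.sum_congr rfl fun i _ => ?_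
    have : 1 + i = i + 1 := by omega
    rw [this]
  have extend : ∑ k ∈ Finset.Icc 1 (m - 1),
        C ((k : ℚ) ^ (n - 1)) * (((m - k : ℕ) : ℚ) • H (m - k))
      = ∑ k ∈ Finset.Icc 1 m,
        C ((k : ℚ) ^ (n - 1)) * (((m - k : ℕ) : ℚ) • H (m - k)) := by
    have hIcc : Finset.Icc 1 m = insert m (Finset.Icc 1 (m - 1)) := by
      ext a; simp only [Finset.mem_Icc, Finset.mem_insert]; omega
    rw [hIcc, Finset.sum_insert (by simp only [Finset.mem_Icc]; omega)]
    simp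
  rw [swap, extend, reindex] at step2
  have key : (m : ℚ) • Dn n (H m)
      = (m : ℚ) • ∑ k ∈ Finset.Icc 1 m, C ((k : ℚ) ^ (n - 1)) * H (m - k) := by
    rw [step2, Finset.smul_sum, ← Finset.sum_add_distrib]
    refine Finset.sum_congr rfl fun k hk => ?_
    simp only [Finset.mem_Icc] at hk
    have hcast : ((m - k : ℕ) : ℚ) = (m : ℚ) - k := by
      rw [Nat.cast_sub hk.2]
    have hpow : (k : ℚ) ^ n = (k : ℚ) ^ (n - 1) * k := by
      conv_lhs => rw [show n = (n - 1) + 1 by omega]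
      rw [pow_succ]
    rw [smul_eq_C_mul, smul_eq_C_mul, hcast, hpow, C_mul, C_sub]
    push_cast
    ring
  have hm0 : (m : ℚ) ≠ 0 := by exact_mod_cast Nat.pos_iff_ne_zero.mp hm
  have hC : (C (m : ℚ) : MvPolynomial ℕ+ ℚ) ≠ 0 := by
    simpa using hm0
  rw [smul_eq_C_mul, smul_eq_C_mul] at key
  exact mul_left_cancel₀ hC key

/-- If `h_0 = 1` and `m·h_m = Σ_{i=1}^m p_i·h_{m-i}` for `m ≥ 1` (Newton's recurrence, which
characterizes the complete homogeneous symmetric functions in the power-sum generators), then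
`D_n(h_m) = Σ_{k=1}^m k^{n-1}·h_{m-k}` for all `n, m ≥ 1`. -/
theorem stmt3 (H : ℕ → MvPolynomial ℕ+ ℚ) (H0 : H 0 = 1)
    (Hrec : ∀ m : ℕ, 1 ≤ m → (m : ℚ) • H m =
      ∑ i ∈ Finset.range m, X i.succPNat * H (m - (i + 1)))
    (n m : ℕ) (hn : 1 ≤ n) (hm : 1 ≤ m) :
    Dn n (H m) = ∑ k ∈ Finset.Icc 1 m, C ((k : ℚ) ^ (n - 1)) * H (m - k) := by
  exact stmt3_aux H H0 Hrec n hn m
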